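/- arXiv:1004.1470 — 6 statements merged into one kernel-verified Lean document; each statement's English description precedes it below -/
import Mathlib

section
/- Let p, q be complex numbers with p + q = 1, q ≠ 0, and τ = p/q. Then for any complex numbers ξ₁, ..., ξ_k (with all denominators nonzero), det(1/(p + q·ξᵢ·ξⱼ − ξᵢ))_{1≤i,j≤k} = (−1)^k (pq)^{k(k−1)/2} q^{−k} · ∏_{i≠j} (ξⱼ − ξᵢ)/(p + q·ξᵢξⱼ − ξᵢ) · ∏_i 1/((1 − ξᵢ)(ξᵢ − τ)). -/
open Finset

/-- product of a constant over pairs i < j -/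
lemma prodIoiConst (z : ℂ) : ∀ k : ℕ, (∏ i : Fin k, ∏ _j ∈ Ioi i, z) = z ^ (k * (k - 1) / 2)
  | 0 => by simp
  | (k+1) => by
    rw [Fin.prod_univ_succ, Fin.prod_Ioi_zero]
    simp_rw [Fin.prod_Ioi_succ]
    rw [prodIoiConst z k, Finset.prod_const, card_univ, Fintype.card_fin,
      Nat.triangle_succ, pow_add, mul_comm]

/-- double product over j ≠ i equals product over ordered pairs of both orders. -/
lemma prod_erase_pairs {k : ℕ} (f : Fin k → Fin k → ℂ) :
    (∏ i, ∏ j ∈ univ.erase i, f i j) = ∏ i, ∏ j ∈ Ioi i, (f i j * f j i) := by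
  have h1 : ∀ i : Fin k, univ.erase i = (Iio i).disjUnion (Ioi i) (by
      simp only [Finset.disjoint_left, mem_Iio, mem_Ioi]
      intro j hj hj2
      exact absurd hj2 (not_lt.2 hj.le)) := by
    intro i
    ext j
    simp only [mem_erase, mem_univ, and_true, mem_disjUnion, mem_Iio, mem_Ioi]
    exact ⟨fun h => h.lt_or_gt, fun h => h.elim (fun h => h.ne) (fun h => h.ne')⟩
  have h2 : (∏ i, ∏ j ∈ Iio i, f i j) = ∏ i, ∏ j ∈ Ioi i, f j i := by
    rw [Finset.prod_comm' (t' := univ) (s' := fun j => Ioi j)]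
    intro i j
    simp [mem_Iio, mem_Ioi]
  simp_rw [h1, Finset.prod_disjUnion, Finset.prod_mul_distrib, h2]
  exact mul_comm _ _

/-- Cauchy-type determinant identity. -/
lemma cauchyDet : ∀ (n : ℕ) (p : ℂ) (a c : Fin n → ℂ), (∀ i j, a i * c j + p ≠ 0) →
    (Matrix.of fun i j => (a i * c j + p)⁻¹).det =
      (-p) ^ (n * (n - 1) / 2) *
        (∏ i, ∏ j ∈ Ioi i, ((a j - a i) * (c j - c i))) *
        ∏ i, ∏ j, (a i * c j + p)⁻¹ := by
  intro n
  induction n with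
  | zero =>
    intro p a c h
    simp [Matrix.det_fin_zero]
  | succ n ih =>
    intro p a c h
    have step1 :
        (Matrix.of fun i j : Fin (n+1) => (a i * c j + p)⁻¹).det =
        (Matrix.of fun i j : Fin (n+1) =>
          if i = 0 then (a 0 * c j + p)⁻¹
          else (a 0 - a i) * (c j * ((a i * c j + p)⁻¹ * (a 0 * c j + p)⁻¹))).det := by
      apply Matrix.det_eq_of_forall_row_eq_smul_add_const
        (fun i => if i = 0 then 0 else 1) 0 (by simp)
      intro i j
      by_cases hi : i = 0
      · simp [hi]
      · simp only [Matrix.of_apply, if_neg hi, if_pos rfl, ite_true]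
        field_simp [h i j, h 0 j, show c j * a 0 + p ≠ 0 by rw [mul_comm]; exact h 0 j,
          show c j * a i + p ≠ 0 by rw [mul_comm]; exact h i j]
        ring
    have step2 :
        (Matrix.of fun i j : Fin (n+1) =>
          if i = 0 then (a 0 * c j + p)⁻¹
          else (a 0 - a i) * (c j * ((a i * c j + p)⁻¹ * (a 0 * c j + p)⁻¹))).det =
        (∏ j, (a 0 * c j + p)⁻¹) * ((∏ i, if i = 0 then 1 else a 0 - a i) *
          (Matrix.of fun i j : Fin (n+1) =>
            if i = 0 then 1 else c j * (a i * c j + p)⁻¹).det) := by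
      rw [show (Matrix.of fun i j : Fin (n+1) =>
          if i = 0 then (a 0 * c j + p)⁻¹
          else (a 0 - a i) * (c j * ((a i * c j + p)⁻¹ * (a 0 * c j + p)⁻¹))) =
        Matrix.of fun i j : Fin (n+1) => (a 0 * c j + p)⁻¹ *
          ((Matrix.of fun i j : Fin (n+1) =>
            (if i = 0 then 1 else a 0 - a i) *
            (Matrix.of fun i j : Fin (n+1) =>
              if i = 0 then 1 else c j * (a i * c j + p)⁻¹) i j)) i j from by
          ext i j
          by_cases hi : i = 0 <;> simp [hi] <;> ring]
      rw [Matrix.det_mul_row, Matrix.det_mul_column]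
    -- column operations, done on the transpose
    have step3 :
        (Matrix.of fun i j : Fin (n+1) =>
          if i = 0 then 1 else c j * (a i * c j + p)⁻¹).det =
        (Matrix.of fun i j : Fin (n+1) =>
          if i = 0 then (if j = 0 then 1 else 0)
          else if j = 0 then c 0 * (a i * c 0 + p)⁻¹
          else p * (c j - c 0) * ((a i * c j + p)⁻¹ * (a i * c 0 + p)⁻¹)).det := by
      rw [← Matrix.det_transpose, ← Matrix.det_transpose (Matrix.of fun i j : Fin (n+1) =>
          if i = 0 then (if j = 0 then 1 else 0)
          else if j = 0 then c 0 * (a i * c 0 + p)⁻¹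
          else p * (c j - c 0) * ((a i * c j + p)⁻¹ * (a i * c 0 + p)⁻¹))]
      apply Matrix.det_eq_of_forall_row_eq_smul_add_const
        (fun j => if j = 0 then 0 else 1) 0 (by simp)
      intro j i
      by_cases hj : j = 0
      · by_cases hi : i = 0 <;> simp [hi, hj]
      · by_cases hi : i = 0
        · simp [hi, hj]
        · simp only [Matrix.transpose_apply, Matrix.of_apply, if_neg hi, if_neg hj, if_pos rfl, ite_true]
          field_simp [h i j, h i 0, show c j * a i + p ≠ 0 by rw [mul_comm]; exact h i j,
            show c 0 * a i + p ≠ 0 by rw [mul_comm]; exact h i 0]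
          ring
    have step4 :
        (Matrix.of fun i j : Fin (n+1) =>
          if i = 0 then (if j = 0 then 1 else 0)
          else if j = 0 then c 0 * (a i * c 0 + p)⁻¹
          else p * (c j - c 0) * ((a i * c j + p)⁻¹ * (a i * c 0 + p)⁻¹)).det =
        (∏ j, if j = 0 then 1 else p * (c j - c 0)) *
          ((∏ i, if i = 0 then 1 else (a i * c 0 + p)⁻¹) *
          (Matrix.of fun i j : Fin (n+1) =>
            if i = 0 then (if j = 0 then 1 else 0)
            else if j = 0 then c 0 else (a i * c j + p)⁻¹).det) := by
      rw [show (Matrix.of fun i j : Fin (n+1) =>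
          if i = 0 then (if j = 0 then 1 else 0)
          else if j = 0 then c 0 * (a i * c 0 + p)⁻¹
          else p * (c j - c 0) * ((a i * c j + p)⁻¹ * (a i * c 0 + p)⁻¹)) =
        Matrix.of fun i j : Fin (n+1) => (if j = 0 then 1 else p * (c j - c 0)) *
          ((Matrix.of fun i j : Fin (n+1) =>
            (if i = 0 then 1 else (a i * c 0 + p)⁻¹) *
            (Matrix.of fun i j : Fin (n+1) =>
              if i = 0 then (if j = 0 then 1 else 0)
              else if j = 0 then c 0 else (a i * c j + p)⁻¹) i j)) i j from by
          ext i j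
          by_cases hi : i = 0 <;> by_cases hj : j = 0
          · simp [hi, hj]
          · simp [hi, hj]
          · simp [hi, hj, mul_comm]
          · simp only [Matrix.of_apply, if_neg hi, if_neg hj]
            ring]
      rw [Matrix.det_mul_row, Matrix.det_mul_column]
    have step5 :
        (Matrix.of fun i j : Fin (n+1) =>
          if i = 0 then (if j = 0 then 1 else 0)
          else if j = 0 then c 0 else (a i * c j + p)⁻¹).det =
        (Matrix.of fun i j : Fin n => (a i.succ * c j.succ + p)⁻¹).det := by
      rw [Matrix.det_succ_row_zero, Fin.sum_univ_succ]
      simp [Matrix.submatrix, Fin.succ_ne_zero, Fin.succAbove_zero]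
    have hih := ih p (fun i => a i.succ) (fun j => c j.succ) (fun i j => h i.succ j.succ)
    have hifa : (∏ i : Fin (n+1), if i = 0 then 1 else a 0 - a i)
        = ∏ i : Fin n, (a 0 - a i.succ) := by
      rw [Fin.prod_univ_succ]
      simp [Fin.succ_ne_zero]
    have hifc : (∏ j : Fin (n+1), if j = 0 then 1 else p * (c j - c 0))
        = p ^ n * ∏ j : Fin n, (c j.succ - c 0) := by
      rw [Fin.prod_univ_succ]
      simp [Fin.succ_ne_zero, Finset.prod_mul_distrib, Finset.prod_const, card_univ]
    have hifd : (∏ i : Fin (n+1), if i = 0 then 1 else (a i * c 0 + p)⁻¹)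
        = ∏ i : Fin n, (a i.succ * c 0 + p)⁻¹ := by
      rw [Fin.prod_univ_succ]
      simp [Fin.succ_ne_zero]
    have hsign : (∏ i : Fin n, (a 0 - a i.succ))
        = (-1 : ℂ) ^ n * ∏ i : Fin n, (a i.succ - a 0) := by
      simp_rw [show ∀ i : Fin n, a 0 - a i.succ = -1 * (a i.succ - a 0) from fun i => by ring,
        Finset.prod_mul_distrib, Finset.prod_const, card_univ, Fintype.card_fin]
    rw [step1, step2, step3, step4, step5, hih, hifa, hifc, hifd, hsign]
    rw [Nat.triangle_succ, pow_add]
    simp_rw [Fin.prod_univ_succ, Fin.prod_Ioi_zero, Fin.prod_Ioi_succ]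
    simp only [Finset.prod_mul_distrib]
    rw [show (-p : ℂ) ^ n = (-1) ^ n * p ^ n from by rw [neg_pow]]
    ring

/-- Lemma 3.1 (Tracy–Widom determinant identity). -/
theorem stmt0 (p q τ : ℂ) (hpq : p + q = 1) (hq : q ≠ 0) (hτ : τ = p / q)
    (k : ℕ) (ξ : Fin k → ℂ)
    (hden : ∀ i j, p + q * ξ i * ξ j - ξ i ≠ 0)
    (h1 : ∀ i, 1 - ξ i ≠ 0) (h2 : ∀ i, ξ i - τ ≠ 0) :
    (Matrix.of fun i j : Fin k => 1 / (p + q * ξ i * ξ j - ξ i)).det =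
      (-1 : ℂ) ^ k * (p * q) ^ (k * (k - 1) / 2) * q ^ (-(k : ℤ)) *
        (∏ i, ∏ j ∈ univ.erase i, (ξ j - ξ i) / (p + q * ξ i * ξ j - ξ i)) *
        ∏ i, 1 / ((1 - ξ i) * (ξ i - τ)) := by
  have hp : p = q * τ := by rw [hτ]; field_simp
  have hF : ∀ i j, ξ i * (q * ξ j - 1) + p ≠ 0 := by
    intro i j
    have h : ξ i * (q * ξ j - 1) + p = p + q * ξ i * ξ j - ξ i := by ring
    rw [h]; exact hden i j
  have hM : (Matrix.of fun i j : Fin k => 1 / (p + q * ξ i * ξ j - ξ i))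
      = Matrix.of fun i j => (ξ i * (q * ξ j - 1) + p)⁻¹ := by
    ext i j
    simp only [Matrix.of_apply, one_div]
    congr 1
    ring
  rw [hM, cauchyDet k p ξ (fun j => q * ξ j - 1) hF]
  have hdiag : ∀ i, ξ i * (q * ξ i - 1) + p = -(q * ((1 - ξ i) * (ξ i - τ))) := by
    intro i
    linear_combination (1 - ξ i) * hp + ξ i * hpq
  have key2 : (∏ i, ∏ j : Fin k, (ξ i * (q * ξ j - 1) + p)⁻¹)
      = (∏ i, (ξ i * (q * ξ i - 1) + p)⁻¹) *
        ∏ i, ∏ j ∈ univ.erase i, (ξ i * (q * ξ j - 1) + p)⁻¹ := by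
    rw [← Finset.prod_mul_distrib]
    exact Finset.prod_congr rfl fun i _ =>
      (Finset.mul_prod_erase univ _ (mem_univ i)).symm
  have key3 : (∏ i, ∏ j ∈ univ.erase i, (ξ i * (q * ξ j - 1) + p)⁻¹)
      = ∏ i, ∏ j ∈ Ioi i, ((ξ i * (q * ξ j - 1) + p)⁻¹ * (ξ j * (q * ξ i - 1) + p)⁻¹) :=
    prod_erase_pairs _
  have hE : (∏ i, ∏ j ∈ univ.erase i, (ξ j - ξ i) / (p + q * ξ i * ξ j - ξ i))
      = ∏ i, ∏ j ∈ Ioi i, ((ξ j - ξ i) / (p + q * ξ i * ξ j - ξ i) *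
          ((ξ i - ξ j) / (p + q * ξ j * ξ i - ξ j))) :=
    prod_erase_pairs _
  have main : (∏ i, ∏ j ∈ Ioi i, ((ξ j - ξ i) * ((q * ξ j - 1) - (q * ξ i - 1)))) *
      (∏ i, ∏ j ∈ univ.erase i, (ξ i * (q * ξ j - 1) + p)⁻¹)
      = (-q) ^ (k * (k - 1) / 2) *
        ∏ i, ∏ j ∈ Ioi i, ((ξ j - ξ i) / (p + q * ξ i * ξ j - ξ i) *
          ((ξ i - ξ j) / (p + q * ξ j * ξ i - ξ j))) := by
    rw [key3, ← prodIoiConst (-q) k, ← Finset.prod_mul_distrib, ← Finset.prod_mul_distrib]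
    refine Finset.prod_congr rfl fun i _ => ?_
    rw [← Finset.prod_mul_distrib, ← Finset.prod_mul_distrib]
    refine Finset.prod_congr rfl fun j _ => ?_
    field_simp [hden i j, hden j i, hF i j, hF j i]
    ring
  have hdiagprod : (∏ i, (ξ i * (q * ξ i - 1) + p)⁻¹)
      = (-1 : ℂ) ^ k * (q⁻¹) ^ k * ∏ i, ((1 - ξ i) * (ξ i - τ))⁻¹ := by
    simp_rw [hdiag]
    simp_rw [show ∀ i : Fin k, (-(q * ((1 - ξ i) * (ξ i - τ))))⁻¹
        = (-1) * (q⁻¹ * ((1 - ξ i) * (ξ i - τ))⁻¹) from fun i => by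
      rw [← neg_inv, mul_inv]; ring]
    rw [Finset.prod_mul_distrib, Finset.prod_mul_distrib, Finset.prod_const,
      Finset.prod_const, card_univ, Fintype.card_fin]
    ring
  have hqk : (q : ℂ) ^ (-(k : ℤ)) = (q⁻¹) ^ k := by
    rw [zpow_neg, zpow_natCast, inv_pow]
  have hpow : (-p : ℂ) ^ (k * (k - 1) / 2) * (-q) ^ (k * (k - 1) / 2)
      = (p * q) ^ (k * (k - 1) / 2) := by
    rw [← mul_pow, neg_mul_neg]
  calc ((-p) ^ (k * (k - 1) / 2) *
          ∏ i, ∏ j ∈ Ioi i, (ξ j - ξ i) * ((fun j => q * ξ j - 1) j - (fun j => q * ξ j - 1) i)) *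
        ∏ i, ∏ j : Fin k, (ξ i * ((fun j => q * ξ j - 1) j) + p)⁻¹
      = (-p) ^ (k * (k - 1) / 2) * (∏ i, (ξ i * (q * ξ i - 1) + p)⁻¹) *
        ((∏ i, ∏ j ∈ Ioi i, ((ξ j - ξ i) * ((q * ξ j - 1) - (q * ξ i - 1)))) *
          (∏ i, ∏ j ∈ univ.erase i, (ξ i * (q * ξ j - 1) + p)⁻¹)) := by
        simp only []
        rw [key2]
        ring
    _ = (-1 : ℂ) ^ k * (p * q) ^ (k * (k - 1) / 2) * q ^ (-(k : ℤ)) *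
        (∏ i, ∏ j ∈ univ.erase i, (ξ j - ξ i) / (p + q * ξ i * ξ j - ξ i)) *
        ∏ i, 1 / ((1 - ξ i) * (ξ i - τ)) := by
        rw [main, hdiagprod, hE, hqk, ← hpow]
        simp only [one_div]
        ring
end

section
/- Let p, q be complex numbers with p + q = 1, pq ≠ 0, τ = p/q, and k ∈ ℕ. For complex ξ₁, ..., ξ_k with all denominators nonzero, (ξ₁²ξ₂²⋯ξ_k² − τ^k)/(1+τ)^{k−1} = ∑_{l=1}^{k} (ξ_l² − τ) · ∏_{i≠l} [ (p + q·ξᵢξ_l − ξᵢ)/(ξ_l − ξᵢ) · (τ − ξ_l ξᵢ)/(1 + τ − ξ_l − ξᵢ) ]. -/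
open Finset Polynomial

private lemma degree_prod_le_card {ι : Type*} (s : Finset ι) (Q : ι → ℂ[X])
    (hQ : ∀ i ∈ s, (Q i).degree ≤ 1) :
    (∏ i ∈ s, Q i).degree ≤ (s.card : WithBot ℕ) := by
  induction s using Finset.cons_induction with
  | empty => simp
  | cons a s ha ih =>
    rw [prod_cons, card_cons]
    calc (Q a * ∏ i ∈ s, Q i).degree ≤ (Q a).degree + (∏ i ∈ s, Q i).degree :=
          degree_mul_le _ _
      _ ≤ 1 + (s.card : WithBot ℕ) := by
          exact add_le_add (hQ a (mem_cons_self a s))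
            (ih fun i hi => hQ i (mem_cons_of_mem hi))
      _ = ((s.card + 1 : ℕ) : WithBot ℕ) := by push_cast; ring

private lemma degree_prod_sub_lt {ι : Type*} (s : Finset ι) (P Q : ι → ℂ[X])
    (hP : ∀ i ∈ s, (P i).degree ≤ 1) (hQ : ∀ i ∈ s, (Q i).degree ≤ 1)
    (hPQ : ∀ i ∈ s, (P i - Q i).degree ≤ 0) :
    (∏ i ∈ s, P i - ∏ i ∈ s, Q i).degree < (s.card : WithBot ℕ) := by
  induction s using Finset.cons_induction with
  | empty => simpa using WithBot.bot_lt_coe 0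
  | cons a s ha ih =>
    rw [prod_cons, prod_cons, card_cons]
    have key : P a * ∏ i ∈ s, P i - Q a * ∏ i ∈ s, Q i
        = P a * (∏ i ∈ s, P i - ∏ i ∈ s, Q i) + (P a - Q a) * ∏ i ∈ s, Q i := by ring
    rw [key]
    have h1 : (P a * (∏ i ∈ s, P i - ∏ i ∈ s, Q i)).degree < ((s.card + 1 : ℕ) : WithBot ℕ) := by
      calc (P a * (∏ i ∈ s, P i - ∏ i ∈ s, Q i)).degree
          ≤ (P a).degree + (∏ i ∈ s, P i - ∏ i ∈ s, Q i).degree := degree_mul_le _ _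
        _ ≤ 1 + (∏ i ∈ s, P i - ∏ i ∈ s, Q i).degree :=
            add_le_add_left (hP a (mem_cons_self a s)) _
        _ < 1 + (s.card : WithBot ℕ) := by
            refine WithBot.add_lt_add_left (by simp) ?_
            exact ih (fun i hi => hP i (mem_cons_of_mem hi))
              (fun i hi => hQ i (mem_cons_of_mem hi))
              (fun i hi => hPQ i (mem_cons_of_mem hi))
        _ = ((s.card + 1 : ℕ) : WithBot ℕ) := by push_cast; ring
    have h2 : ((P a - Q a) * ∏ i ∈ s, Q i).degree < ((s.card + 1 : ℕ) : WithBot ℕ) := by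
      calc ((P a - Q a) * ∏ i ∈ s, Q i).degree
          ≤ (P a - Q a).degree + (∏ i ∈ s, Q i).degree := degree_mul_le _ _
        _ ≤ 0 + (s.card : WithBot ℕ) :=
            add_le_add (hPQ a (mem_cons_self a s))
              (degree_prod_le_card s Q (fun i hi => hQ i (mem_cons_of_mem hi)))
        _ = (s.card : WithBot ℕ) := by rw [zero_add]
        _ < ((s.card + 1 : ℕ) : WithBot ℕ) := by exact_mod_cast Nat.lt_succ_self _
    exact lt_of_le_of_lt (degree_add_le _ _) (max_lt h1 h2)

private lemma star {ι : Type*} [DecidableEq ι] (τ : ℂ) :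
    ∀ (n : ℕ) (s : Finset ι) (ξ u : ι → ℂ), s.card = n →
      (∀ i ∈ s, ∀ j ∈ s, i ≠ j → u i ≠ u j) →
      ∑ l ∈ s, (ξ l ^ 2 - τ) * ∏ i ∈ s.erase l, ((ξ i ^ 2 * u l - τ * u i) / (u l - u i))
        = (∏ i ∈ s, ξ i ^ 2) - τ ^ n := by
  intro n
  induction n with
  | zero =>
    intro s ξ u hcard _
    rw [Finset.card_eq_zero] at hcard
    subst hcard; simp
  | succ n ih =>
    intro s ξ u hcard hu
    by_cases hz : ∃ j ∈ s, u j = 0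
    · -- Case A : one node is zero; reduce to n
      obtain ⟨j, hj, huj⟩ := hz
      have hcard' : (s.erase j).card = n := by
        rw [card_erase_of_mem hj, hcard]; rfl
      have hune : ∀ i ∈ s.erase j, u i ≠ 0 := by
        intro i hi
        obtain ⟨hij, his⟩ := mem_erase.mp hi
        have := hu i his j hj hij
        rw [huj] at this; exact this
      rw [← Finset.add_sum_erase _ _ hj]
      have hterm : (ξ j ^ 2 - τ) * ∏ i ∈ s.erase j,
          ((ξ i ^ 2 * u j - τ * u i) / (u j - u i)) = (ξ j ^ 2 - τ) * τ ^ n := by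
        congr 1
        rw [← hcard']
        rw [Finset.prod_congr rfl (fun i hi => ?_), Finset.prod_const]
        rw [huj, mul_zero, zero_sub, zero_sub, neg_div_neg_eq, mul_div_assoc,
          div_self (hune i hi), mul_one]
      rw [hterm]
      have hsum' : ∑ l ∈ s.erase j, (ξ l ^ 2 - τ) * ∏ i ∈ s.erase l,
          ((ξ i ^ 2 * u l - τ * u i) / (u l - u i))
          = ξ j ^ 2 * ((∏ i ∈ s.erase j, ξ i ^ 2) - τ ^ n) := by
        calc ∑ l ∈ s.erase j, (ξ l ^ 2 - τ) *
              ∏ i ∈ s.erase l, ((ξ i ^ 2 * u l - τ * u i) / (u l - u i))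
            = ∑ l ∈ s.erase j, ξ j ^ 2 * ((ξ l ^ 2 - τ) *
              ∏ i ∈ (s.erase j).erase l, ((ξ i ^ 2 * u l - τ * u i) / (u l - u i))) := by
              refine Finset.sum_congr rfl (fun l hl => ?_)
              obtain ⟨hlj, hls⟩ := mem_erase.mp hl
              have hjmem : j ∈ s.erase l := mem_erase.mpr ⟨fun h => hlj h.symm, hj⟩
              rw [← Finset.mul_prod_erase _ _ hjmem, huj, mul_zero, sub_zero, sub_zero,
                mul_div_assoc, div_self (hune l hl), mul_one, Finset.erase_right_comm]
              ring
          _ = ξ j ^ 2 * ∑ l ∈ s.erase j, ((ξ l ^ 2 - τ) *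
              ∏ i ∈ (s.erase j).erase l, ((ξ i ^ 2 * u l - τ * u i) / (u l - u i))) :=
              (Finset.mul_sum _ _ _).symm
          _ = ξ j ^ 2 * ((∏ i ∈ s.erase j, ξ i ^ 2) - τ ^ n) := by
              rw [ih (s.erase j) ξ u hcard' (fun i hi j' hj' hij =>
                hu i (mem_of_mem_erase hi) j' (mem_of_mem_erase hj') hij)]
      rw [hsum', ← Finset.mul_prod_erase _ _ hj]
      ring
    · -- Case B : all nodes nonzero; Lagrange interpolation
      push_neg at hz
      set v : ι → ℂ := fun i => u i + τ with hv
      have hvinj : Set.InjOn v ↑s := by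
        intro x hx y hy hxy
        by_contra hne
        exact hu x hx y hy hne (by simpa [hv] using hxy)
      set P : ι → ℂ[X] := fun i => C (ξ i ^ 2) * (X - C τ) - C (τ * u i) with hP
      set Q : ι → ℂ[X] := fun i => C (ξ i ^ 2) * (X - C (v i)) with hQ
      have hdegP : ∀ i ∈ s, (P i).degree ≤ 1 := by
        intro i _
        refine le_trans (degree_sub_le _ _) (max_le ?_ ?_)
        · refine le_trans (degree_mul_le _ _) ?_
          rw [degree_X_sub_C]
          calc (C (ξ i ^ 2)).degree + 1 ≤ 0 + 1 := add_le_add_left degree_C_le _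
            _ = 1 := zero_add 1
        · exact le_trans degree_C_le (by norm_num)
      have hdegQ : ∀ i ∈ s, (Q i).degree ≤ 1 := by
        intro i _
        refine le_trans (degree_mul_le _ _) ?_
        rw [degree_X_sub_C]
        calc (C (ξ i ^ 2)).degree + 1 ≤ 0 + 1 := add_le_add_left degree_C_le _
          _ = 1 := zero_add 1
      have hdegPQ : ∀ i ∈ s, (P i - Q i).degree ≤ 0 := by
        intro i _
        have : P i - Q i = C (ξ i ^ 2 * u i - τ * u i) := by
          simp only [hP, hQ, hv, map_sub, map_mul, map_add, map_pow]
          ring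
        rw [this]; exact degree_C_le
      have hdeg : (∏ i ∈ s, P i - ∏ i ∈ s, Q i).degree < (s.card : WithBot ℕ) :=
        degree_prod_sub_lt s P Q hdegP hdegQ hdegPQ
      have hlag := Lagrange.eq_interpolate (v := v) hvinj hdeg
      have hE := congrArg (Polynomial.eval τ) hlag
      rw [Lagrange.interpolate_apply] at hE
      rw [eval_sub, eval_prod, eval_prod, eval_finset_sum] at hE
      have hPe : ∀ i, (P i).eval τ = -(τ * u i) := by
        intro i; simp [hP]
      have hQe : ∀ i, (Q i).eval τ = ξ i ^ 2 * (-u i) := by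
        intro i; simp only [hQ, eval_mul, eval_sub, eval_C, eval_X, hv]; ring
      have hbase : ∀ l ∈ s,
          ((∏ i ∈ s, P i - ∏ i ∈ s, Q i).eval (v l)) = ∏ i ∈ s, (ξ i ^ 2 * u l - τ * u i) := by
        intro l hl
        rw [eval_sub, eval_prod, eval_prod]
        have hQ0 : ∏ i ∈ s, (Q i).eval (v l) = 0 := by
          refine Finset.prod_eq_zero hl ?_
          simp [hQ]
        rw [hQ0, sub_zero]
        refine Finset.prod_congr rfl (fun i _ => ?_)
        simp only [hP, eval_sub, eval_mul, eval_C, eval_X, hv]; ring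
      have hbasis : ∀ l ∈ s, (Lagrange.basis s v l).eval τ
          = ∏ i ∈ s.erase l, ((u l - u i)⁻¹ * (-u i)) := by
        intro l hl
        rw [Lagrange.basis, eval_prod]
        refine Finset.prod_congr rfl (fun i _ => ?_)
        simp only [Lagrange.basisDivisor, eval_mul, eval_C, eval_sub, eval_X, hv]
        rw [show u l + τ - (u i + τ) = u l - u i by ring,
          show τ - (u i + τ) = -u i by ring]
      rw [Finset.sum_congr rfl (fun l hl => by
        rw [eval_mul, eval_C, hbase l hl, hbasis l hl])] at hE
      simp only [hPe, hQe] at hE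
      -- Now hE : ∏ (-(τ u i)) - ∏ (ξ i ^2 * (-u i)) = ∑ l, (∏ (ξ²u_l - τu)) * ∏' ((u_l-u_i)⁻¹ * (-u_i))
      have hN : ∏ i ∈ s, (-u i) ≠ 0 := by
        refine Finset.prod_ne_zero_iff.mpr (fun i hi => ?_)
        simpa using hz i hi
      refine mul_left_cancel₀ hN ?_
      have key : ∀ l ∈ s, (∏ i ∈ s, (-u i)) *
          ((ξ l ^ 2 - τ) * ∏ i ∈ s.erase l, ((ξ i ^ 2 * u l - τ * u i) / (u l - u i)))
          = -((∏ i ∈ s, (ξ i ^ 2 * u l - τ * u i)) *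
              ∏ i ∈ s.erase l, ((u l - u i)⁻¹ * (-u i))) := by
        intro l hl
        rw [← Finset.mul_prod_erase s (fun i => -u i) hl,
          ← Finset.mul_prod_erase s (fun i => ξ i ^ 2 * u l - τ * u i) hl]
        have hmerge1 : (∏ i ∈ s.erase l, (-u i)) *
            ∏ i ∈ s.erase l, ((ξ i ^ 2 * u l - τ * u i) / (u l - u i))
            = ∏ i ∈ s.erase l, ((-u i) * ((ξ i ^ 2 * u l - τ * u i) / (u l - u i))) :=
          (Finset.prod_mul_distrib).symm
        have hmerge2 : (∏ i ∈ s.erase l, (ξ i ^ 2 * u l - τ * u i)) *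
            ∏ i ∈ s.erase l, ((u l - u i)⁻¹ * (-u i))
            = ∏ i ∈ s.erase l, ((ξ i ^ 2 * u l - τ * u i) * ((u l - u i)⁻¹ * (-u i))) :=
          (Finset.prod_mul_distrib).symm
        have hfac : ∀ i ∈ s.erase l, (-u i) * ((ξ i ^ 2 * u l - τ * u i) / (u l - u i))
            = (ξ i ^ 2 * u l - τ * u i) * ((u l - u i)⁻¹ * (-u i)) := by
          intro i _
          rw [div_eq_mul_inv]; ring
        calc (-u l * ∏ i ∈ s.erase l, (-u i)) *
            ((ξ l ^ 2 - τ) * ∏ i ∈ s.erase l, ((ξ i ^ 2 * u l - τ * u i) / (u l - u i)))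
            = (-u l * (ξ l ^ 2 - τ)) * ((∏ i ∈ s.erase l, (-u i)) *
              ∏ i ∈ s.erase l, ((ξ i ^ 2 * u l - τ * u i) / (u l - u i))) := by ring
          _ = (-u l * (ξ l ^ 2 - τ)) *
              ∏ i ∈ s.erase l, ((ξ i ^ 2 * u l - τ * u i) * ((u l - u i)⁻¹ * (-u i))) := by
              rw [hmerge1, Finset.prod_congr rfl hfac]
          _ = (-u l * (ξ l ^ 2 - τ)) * ((∏ i ∈ s.erase l, (ξ i ^ 2 * u l - τ * u i)) *
              ∏ i ∈ s.erase l, ((u l - u i)⁻¹ * (-u i))) := by rw [hmerge2]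
          _ = -(((ξ l ^ 2 * u l - τ * u l) * ∏ i ∈ s.erase l, (ξ i ^ 2 * u l - τ * u i)) *
              ∏ i ∈ s.erase l, ((u l - u i)⁻¹ * (-u i))) := by ring
      have h1 : ∏ i ∈ s, (-(τ * u i)) = τ ^ (n + 1) * ∏ i ∈ s, (-u i) := by
        rw [Finset.prod_congr rfl (fun i _ => show -(τ * u i) = τ * (-u i) by ring),
          Finset.prod_mul_distrib, Finset.prod_const, hcard]
      have h2 : ∏ i ∈ s, (ξ i ^ 2 * (-u i)) = (∏ i ∈ s, ξ i ^ 2) * ∏ i ∈ s, (-u i) :=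
        Finset.prod_mul_distrib
      calc (∏ i ∈ s, (-u i)) * ∑ l ∈ s, (ξ l ^ 2 - τ) *
            ∏ i ∈ s.erase l, ((ξ i ^ 2 * u l - τ * u i) / (u l - u i))
          = ∑ l ∈ s, (∏ i ∈ s, (-u i)) * ((ξ l ^ 2 - τ) *
            ∏ i ∈ s.erase l, ((ξ i ^ 2 * u l - τ * u i) / (u l - u i))) := Finset.mul_sum _ _ _
        _ = ∑ l ∈ s, -((∏ i ∈ s, (ξ i ^ 2 * u l - τ * u i)) *
            ∏ i ∈ s.erase l, ((u l - u i)⁻¹ * (-u i))) := Finset.sum_congr rfl key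
        _ = -∑ l ∈ s, (∏ i ∈ s, (ξ i ^ 2 * u l - τ * u i)) *
            ∏ i ∈ s.erase l, ((u l - u i)⁻¹ * (-u i)) := by
            rw [Finset.sum_neg_distrib]
        _ = -(∏ i ∈ s, (-(τ * u i)) - ∏ i ∈ s, (ξ i ^ 2 * (-u i))) := by rw [← hE]
        _ = (∏ i ∈ s, (-u i)) * ((∏ i ∈ s, ξ i ^ 2) - τ ^ (n + 1)) := by
            rw [h1, h2]; ring

/-- Equation (3.7): the key rational-function identity for the induction step. -/
theorem stmt2 (p q τ : ℂ) (hpq : p + q = 1) (hpq0 : p * q ≠ 0) (hτ : τ = p / q)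
    (k : ℕ) (ξ : Fin k → ℂ)
    (hdist : ∀ i j, i ≠ j → ξ i ≠ ξ j)
    (hsum : ∀ i j, i ≠ j → 1 + τ - ξ i - ξ j ≠ 0)
    (hτ1 : (1 : ℂ) + τ ≠ 0) :
    ((∏ i, ξ i ^ 2) - τ ^ k) / (1 + τ) ^ (k - 1) =
      ∑ l, (ξ l ^ 2 - τ) * ∏ i ∈ univ.erase l,
        ((p + q * ξ i * ξ l - ξ i) / (ξ l - ξ i) *
          ((τ - ξ l * ξ i) / (1 + τ - ξ l - ξ i))) := by
  have hq : q ≠ 0 := fun h => hpq0 (by rw [h, mul_zero])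
  have hpτ : p = τ * q := by rw [hτ]; field_simp
  have hqinv : q = (1 + τ)⁻¹ := by
    have h1 : (1 + τ) * q = 1 := by
      rw [hτ]; field_simp; linear_combination hpq
    exact eq_inv_of_mul_eq_one_left (by rw [mul_comm] at h1; exact h1)
  set u : Fin k → ℂ := fun i => (1 + τ) * ξ i - ξ i ^ 2 - τ with hu
  have husub : ∀ l i : Fin k, u l - u i = (ξ l - ξ i) * (1 + τ - ξ l - ξ i) := by
    intro l i; simp only [hu]; ring
  have hudist : ∀ i ∈ (univ : Finset (Fin k)), ∀ j ∈ (univ : Finset (Fin k)),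
      i ≠ j → u i ≠ u j := by
    intro i _ j _ hij
    have hne : u i - u j ≠ 0 := by
      rw [husub]
      exact mul_ne_zero (sub_ne_zero.mpr (hdist i j hij)) (hsum i j hij)
    intro h; exact hne (by rw [h, sub_self])
  have hfac : ∀ l i : Fin k, i ≠ l →
      (p + q * ξ i * ξ l - ξ i) / (ξ l - ξ i) * ((τ - ξ l * ξ i) / (1 + τ - ξ l - ξ i))
      = (1 + τ)⁻¹ * ((ξ i ^ 2 * u l - τ * u i) / (u l - u i)) := by
    intro l i hil
    have hd1 : ξ l - ξ i ≠ 0 := sub_ne_zero.mpr (hdist l i (fun h => hil h.symm))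
    have hd2 : 1 + τ - ξ l - ξ i ≠ 0 := hsum l i (fun h => hil h.symm)
    rw [husub, hpτ, hqinv]
    simp only [hu]
    field_simp
    ring
  have hstar := star τ k (univ : Finset (Fin k)) ξ u (by simp) hudist
  have hrhs : ∑ l, (ξ l ^ 2 - τ) * ∏ i ∈ univ.erase l,
      ((p + q * ξ i * ξ l - ξ i) / (ξ l - ξ i) *
        ((τ - ξ l * ξ i) / (1 + τ - ξ l - ξ i)))
      = ((1 + τ)⁻¹) ^ (k - 1) * ((∏ i, ξ i ^ 2) - τ ^ k) := by
    rw [← hstar, Finset.mul_sum]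
    refine Finset.sum_congr rfl (fun l _ => ?_)
    rw [Finset.prod_congr rfl (fun i hi => hfac l i (Finset.mem_erase.mp hi).1),
      Finset.prod_mul_distrib, Finset.prod_const, Finset.card_erase_of_mem (mem_univ l),
      Finset.card_univ, Fintype.card_fin]
    ring
  rw [hrhs, div_eq_mul_inv, ← inv_pow]
  ring
end

section
/- Let p, q be complex with p+q=1, pq ≠ 0, τ = p/q ≠ 1, and let ξ₁,...,ξ_k be complex numbers distinct from 1, τ, and each other, with 1 + τ − ξᵢ − ξⱼ ≠ 0 for all i, j. Define g(z) = ∏_{l} (p + q·ξ_l·z − ξ_l)/(z − ξ_l) · ∏_{l} (τ − z·ξ_l)/(1 + τ − z − ξ_l) · (2z − 1 − τ)/((z − 1)(qz − p)). Then the residue of g at z = 1 equals p^k/q and the residue of g at z = τ equals p^k/q. -/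
open Finset Filter

/-- Residues of g at the simple poles z = 1 and z = τ both equal p^k/q.
(The residue at a simple pole a is the limit of (z−a)·g(z) as z → a.) -/
theorem stmt5 (p q τ : ℂ) (hpq : p + q = 1) (hpq0 : p * q ≠ 0) (hτ : τ = p / q)
    (hτ1 : τ ≠ 1) (k : ℕ) (ξ : Fin k → ℂ)
    (hξ1 : ∀ l, ξ l ≠ 1) (hξτ : ∀ l, ξ l ≠ τ)
    (hdist : ∀ i j, i ≠ j → ξ i ≠ ξ j)
    (hsum : ∀ i j, 1 + τ - ξ i - ξ j ≠ 0) :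
    Tendsto
      (fun z : ℂ => (z - 1) *
        ((∏ l, (p + q * ξ l * z - ξ l) / (z - ξ l)) *
          (∏ l, (τ - z * ξ l) / (1 + τ - z - ξ l)) *
          ((2 * z - 1 - τ) / ((z - 1) * (q * z - p)))))
      (nhdsWithin 1 {(1 : ℂ)}ᶜ) (nhds (p ^ k / q)) ∧
    Tendsto
      (fun z : ℂ => (z - τ) *
        ((∏ l, (p + q * ξ l * z - ξ l) / (z - ξ l)) *
          (∏ l, (τ - z * ξ l) / (1 + τ - z - ξ l)) *
          ((2 * z - 1 - τ) / ((z - 1) * (q * z - p)))))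
      (nhdsWithin τ {τ}ᶜ) (nhds (p ^ k / q)) := by
  have hp : p ≠ 0 := left_ne_zero_of_mul hpq0
  have hq : q ≠ 0 := right_ne_zero_of_mul hpq0
  have hτq : τ * q = p := by rw [hτ]; field_simp
  have hqp : q - p ≠ 0 := by
    intro h
    apply hτ1
    rw [hτ, div_eq_one_iff_eq hq]
    linear_combination -h
  have hτ1' : τ - 1 ≠ 0 := sub_ne_zero.mpr hτ1
  -- continuity of the two products at any point a with good conditions
  have cprod : ∀ a : ℂ, (∀ l, a - ξ l ≠ 0) → (∀ l, 1 + τ - a - ξ l ≠ 0) →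
      ContinuousAt (fun z => (∏ l, (p + q * ξ l * z - ξ l) / (z - ξ l)) *
          (∏ l, (τ - z * ξ l) / (1 + τ - z - ξ l))) a := by
    intro a h1 h2
    apply ContinuousAt.mul
    · exact tendsto_finset_prod _ fun l _ => ContinuousAt.div (by fun_prop) (by fun_prop) (h1 l)
    · exact tendsto_finset_prod _ fun l _ => ContinuousAt.div (by fun_prop) (by fun_prop) (h2 l)
  constructor
  · have heq : ∀ᶠ z in nhdsWithin 1 {(1 : ℂ)}ᶜ,
        ((∏ l, (p + q * ξ l * z - ξ l) / (z - ξ l)) *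
          (∏ l, (τ - z * ξ l) / (1 + τ - z - ξ l)) *
          ((2 * z - 1 - τ) / (q * z - p)))
        = (z - 1) *
        ((∏ l, (p + q * ξ l * z - ξ l) / (z - ξ l)) *
          (∏ l, (τ - z * ξ l) / (1 + τ - z - ξ l)) *
          ((2 * z - 1 - τ) / ((z - 1) * (q * z - p)))) := by
      filter_upwards [self_mem_nhdsWithin] with z hz
      have hz1 : z - 1 ≠ 0 := sub_ne_zero.mpr hz
      have : (z - 1) * ((2 * z - 1 - τ) / ((z - 1) * (q * z - p)))
          = (2 * z - 1 - τ) / (q * z - p) := by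
        rw [mul_div_assoc']
        exact mul_div_mul_left _ _ hz1
      calc _ = (∏ l, (p + q * ξ l * z - ξ l) / (z - ξ l)) *
          (∏ l, (τ - z * ξ l) / (1 + τ - z - ξ l)) *
          ((z - 1) * ((2 * z - 1 - τ) / ((z - 1) * (q * z - p)))) := by rw [this]
        _ = _ := by ring
    refine Tendsto.congr' heq ?_
    have hc : ContinuousAt (fun z : ℂ =>
        (∏ l, (p + q * ξ l * z - ξ l) / (z - ξ l)) *
          (∏ l, (τ - z * ξ l) / (1 + τ - z - ξ l)) *
          ((2 * z - 1 - τ) / (q * z - p))) 1 := by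
      apply ContinuousAt.mul
      · exact cprod 1 (fun l => sub_ne_zero.mpr (Ne.symm (hξ1 l)))
          (fun l => by simpa using sub_ne_zero.mpr (Ne.symm (hξτ l)) )
      · exact ContinuousAt.div (by fun_prop) (by fun_prop) (by simpa using hqp)
    refine Tendsto.mono_left ?_ (nhdsWithin_le_nhds (s := {(1:ℂ)}ᶜ))
    convert hc.tendsto using 2
    have e1 : (∏ l, (p + q * ξ l * 1 - ξ l) / ((1:ℂ) - ξ l)) = p ^ k := by
      rw [show p ^ k = ∏ _l : Fin k, p by simp]
      refine Finset.prod_congr rfl fun l _ => ?_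
      have h1 : (1:ℂ) - ξ l ≠ 0 := sub_ne_zero.mpr (Ne.symm (hξ1 l))
      field_simp
      linear_combination (ξ l) * hpq
    have e2 : (∏ l, (τ - 1 * ξ l) / (1 + τ - 1 - ξ l)) = 1 := by
      refine Finset.prod_eq_one fun l _ => ?_
      have h2 : τ - ξ l ≠ 0 := sub_ne_zero.mpr (Ne.symm (hξτ l))
      rw [one_mul]
      have : 1 + τ - 1 - ξ l = τ - ξ l := by ring
      rw [this, div_self h2]
    have e3 : (2 * (1:ℂ) - 1 - τ) / (q * 1 - p) = 1 / q := by
      rw [div_eq_div_iff (by simpa using hqp) hq]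
      linear_combination -hτq
    simp only [e1, e2, e3]
    field_simp
  · have hqzp : ∀ z : ℂ, q * z - p = q * (z - τ) := by
      intro z; linear_combination hτq
    have heq : ∀ᶠ z in nhdsWithin τ {τ}ᶜ,
        ((∏ l, (p + q * ξ l * z - ξ l) / (z - ξ l)) *
          (∏ l, (τ - z * ξ l) / (1 + τ - z - ξ l)) *
          ((2 * z - 1 - τ) / ((z - 1) * q)))
        = (z - τ) *
        ((∏ l, (p + q * ξ l * z - ξ l) / (z - ξ l)) *
          (∏ l, (τ - z * ξ l) / (1 + τ - z - ξ l)) *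
          ((2 * z - 1 - τ) / ((z - 1) * (q * z - p)))) := by
      filter_upwards [self_mem_nhdsWithin] with z hz
      have hzτ : z - τ ≠ 0 := sub_ne_zero.mpr hz
      have : (z - τ) * ((2 * z - 1 - τ) / ((z - 1) * (q * z - p)))
          = (2 * z - 1 - τ) / ((z - 1) * q) := by
        rw [hqzp, mul_div_assoc']
        have : (z - 1) * (q * (z - τ)) = (z - τ) * ((z - 1) * q) := by ring
        rw [this]
        exact mul_div_mul_left _ _ hzτ
      calc _ = (∏ l, (p + q * ξ l * z - ξ l) / (z - ξ l)) *
          (∏ l, (τ - z * ξ l) / (1 + τ - z - ξ l)) *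
          ((z - τ) * ((2 * z - 1 - τ) / ((z - 1) * (q * z - p)))) := by rw [this]
        _ = _ := by ring
    refine Tendsto.congr' heq ?_
    have hc : ContinuousAt (fun z : ℂ =>
        (∏ l, (p + q * ξ l * z - ξ l) / (z - ξ l)) *
          (∏ l, (τ - z * ξ l) / (1 + τ - z - ξ l)) *
          ((2 * z - 1 - τ) / ((z - 1) * q))) τ := by
      apply ContinuousAt.mul
      · refine cprod τ (fun l => sub_ne_zero.mpr (Ne.symm (hξτ l))) (fun l => ?_)
        have : 1 + τ - τ - ξ l = 1 - ξ l := by ring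
        rw [this]
        exact sub_ne_zero.mpr (Ne.symm (hξ1 l))
      · exact ContinuousAt.div (by fun_prop) (by fun_prop) (mul_ne_zero hτ1' hq)
    refine Tendsto.mono_left ?_ (nhdsWithin_le_nhds (s := {τ}ᶜ))
    convert hc.tendsto using 2
    have e1 : (∏ l, (p + q * ξ l * τ - ξ l) / (τ - ξ l)) = q ^ k := by
      rw [show q ^ k = ∏ _l : Fin k, q by simp]
      refine Finset.prod_congr rfl fun l _ => ?_
      have h1 : τ - ξ l ≠ 0 := sub_ne_zero.mpr (Ne.symm (hξτ l))
      field_simp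
      linear_combination (ξ l - 1) * hτq + (ξ l) * hpq
    have e2 : (∏ l, (τ - τ * ξ l) / (1 + τ - τ - ξ l)) = τ ^ k := by
      rw [show τ ^ k = ∏ _l : Fin k, τ by simp]
      refine Finset.prod_congr rfl fun l _ => ?_
      have h1 : (1:ℂ) - ξ l ≠ 0 := sub_ne_zero.mpr (Ne.symm (hξ1 l))
      have : 1 + τ - τ - ξ l = 1 - ξ l := by ring
      rw [this]
      rw [div_eq_iff h1]
      ring
    have e3 : (2 * τ - 1 - τ) / ((τ - 1) * q) = 1 / q := by
      have : 2 * τ - 1 - τ = τ - 1 := by ring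
      rw [this, div_mul_eq_div_div, div_self hτ1']
    simp only [e1, e2, e3]
    rw [hτ]
    field_simp
    rw [div_pow, mul_div_assoc', mul_div_cancel_left₀ _ (pow_ne_zero k hq)]
end

section
/- Let p, q be complex with p+q=1, pq ≠ 0, τ = p/q, and ξ₁,...,ξ_k pairwise distinct complex numbers avoiding the poles. With g as above, for each l, Res_{z=ξ_l} g(z) = (ξ_l² − τ) · ∏_{i≠l} (p + q·ξᵢξ_l − ξᵢ)/(ξ_l − ξᵢ) · (τ − ξ_l ξᵢ)/(1 + τ − ξ_l − ξᵢ). -/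
open Finset Filter

/-- Residue of g at the simple pole z = ξ_l. -/
theorem stmt6 (p q τ : ℂ) (hpq : p + q = 1) (hpq0 : p * q ≠ 0) (hτ : τ = p / q)
    (k : ℕ) (ξ : Fin k → ℂ)
    (hdist : ∀ i j, i ≠ j → ξ i ≠ ξ j)
    (hξ1 : ∀ l, ξ l ≠ 1) (hξτ : ∀ l, ξ l ≠ τ)
    (hsum : ∀ i j, 1 + τ - ξ i - ξ j ≠ 0)
    (l : Fin k) :
    Tendsto
      (fun z : ℂ => (z - ξ l) *
        ((∏ m, (p + q * ξ m * z - ξ m) / (z - ξ m)) *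
          (∏ m, (τ - z * ξ m) / (1 + τ - z - ξ m)) *
          ((2 * z - 1 - τ) / ((z - 1) * (q * z - p)))))
      (nhdsWithin (ξ l) {ξ l}ᶜ)
      (nhds ((ξ l ^ 2 - τ) * ∏ i ∈ univ.erase l,
        ((p + q * ξ i * ξ l - ξ i) / (ξ l - ξ i) *
          ((τ - ξ l * ξ i) / (1 + τ - ξ l - ξ i))))) := by
  have hq : q ≠ 0 := fun h => hpq0 (by simp [h])
  set a := ξ l with ha
  have hD1 : a - 1 ≠ 0 := sub_ne_zero.mpr (hξ1 l)
  have hD2 : q * a - p ≠ 0 := by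
    intro h
    apply hξτ l
    rw [hτ, eq_div_iff hq, ← ha]
    linear_combination h
  have hS : 1 + τ - a - a ≠ 0 := hsum l l
  -- the continuous version of the function (after cancelling z - a)
  set g' : ℂ → ℂ := fun z =>
    (p + q * a * z - a) *
      (∏ m ∈ univ.erase l, (p + q * ξ m * z - ξ m) / (z - ξ m)) *
      ((∏ m, (τ - z * ξ m) / (1 + τ - z - ξ m)) *
        ((2 * z - 1 - τ) / ((z - 1) * (q * z - p)))) with hg'
  have key : ∀ z : ℂ, z ≠ a →
      (z - a) *
        ((∏ m, (p + q * ξ m * z - ξ m) / (z - ξ m)) *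
          (∏ m, (τ - z * ξ m) / (1 + τ - z - ξ m)) *
          ((2 * z - 1 - τ) / ((z - 1) * (q * z - p)))) = g' z := by
    intro z hz
    have hza : z - a ≠ 0 := sub_ne_zero.mpr hz
    have h1 : (z - a) * ((p + q * ξ l * z - ξ l) / (z - ξ l)) = p + q * a * z - a := by
      rw [← ha, mul_div_assoc', mul_div_cancel_left₀ _ hza]
    rw [hg']
    simp only
    rw [← Finset.mul_prod_erase univ (fun m => (p + q * ξ m * z - ξ m) / (z - ξ m))
      (Finset.mem_univ l)]
    simp only [← ha]
    linear_combination ((∏ m ∈ univ.erase l, (p + q * ξ m * z - ξ m) / (z - ξ m)) *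
      (∏ m, (τ - z * ξ m) / (1 + τ - z - ξ m)) *
      ((2 * z - 1 - τ) / ((z - 1) * (q * z - p)))) * h1
  -- the limit of g' at a
  have hcont : ContinuousAt g' a := by
    rw [hg']
    apply ContinuousAt.mul
    apply ContinuousAt.mul
    · fun_prop
    · exact tendsto_finset_prod _ fun m hm =>
        ContinuousAt.div (by fun_prop) (by fun_prop)
          (sub_ne_zero.mpr (hdist l m fun h => (Finset.mem_erase.mp hm).1 h.symm))
    apply ContinuousAt.mul
    · exact tendsto_finset_prod _ fun m _ =>
        ContinuousAt.div (by fun_prop) (by fun_prop) (hsum l m)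
    · exact ContinuousAt.div (by fun_prop) (by fun_prop) (mul_ne_zero hD1 hD2)
  have hg'tendsto : Tendsto g' (nhdsWithin a {a}ᶜ) (nhds (g' a)) :=
    hcont.continuousWithinAt.tendsto
  -- value of g' at a equals the claimed residue
  have hval : g' a = (a ^ 2 - τ) * ∏ i ∈ univ.erase l,
      ((p + q * ξ i * a - ξ i) / (a - ξ i) *
        ((τ - a * ξ i) / (1 + τ - a - ξ i))) := by
    rw [hg']
    simp only
    rw [← Finset.mul_prod_erase univ (fun m => (τ - a * ξ m) / (1 + τ - a - ξ m))
      (Finset.mem_univ l), Finset.prod_mul_distrib]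
    simp only [← ha]
    have hscalar : (p + q * a * a - a) * ((τ - a * a) / (1 + τ - a - a) *
        ((2 * a - 1 - τ) / ((a - 1) * (q * a - p)))) = a ^ 2 - τ := by
      have e1 : p + q * a * a - a = (q * a - p) * (a - 1) := by linear_combination a * hpq
      rw [e1]
      field_simp
      ring
    linear_combination ((∏ m ∈ univ.erase l, (p + q * ξ m * a - ξ m) / (a - ξ m)) *
      (∏ m ∈ univ.erase l, (τ - a * ξ m) / (1 + τ - a - ξ m))) * hscalar
  refine Tendsto.congr' ?_ (hval ▸ hg'tendsto)
  filter_upwards [eventually_mem_nhdsWithin] with z hz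
  exact (key z hz).symm
end

section
/- Let p, q be complex with p+q=1, pq ≠ 0, τ = p/q, and ξ₁,...,ξ_k complex numbers avoiding the poles. With g as above and 1 + τ = 1/q, for each l, Res_{z = 1+τ−ξ_l} g(z) = Res_{z = ξ_l} g(z). -/
open Finset Filter

/-- The residues of g at the paired simple poles ξ_l and 1 + τ − ξ_l coincide:
for every r, (z − ξ_l)·g(z) → r as z → ξ_l iff (z − (1+τ−ξ_l))·g(z) → r as
z → 1 + τ − ξ_l. -/
theorem stmt7 (p q τ : ℂ) (hpq : p + q = 1) (hpq0 : p * q ≠ 0) (hτ : τ = p / q)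
    (k : ℕ) (ξ : Fin k → ℂ)
    (hdist : ∀ i j, i ≠ j → ξ i ≠ ξ j)
    (hξ1 : ∀ l, ξ l ≠ 1) (hξτ : ∀ l, ξ l ≠ τ)
    (hsum : ∀ i j, 1 + τ - ξ i - ξ j ≠ 0)
    (l : Fin k) (r : ℂ) :
    Tendsto
      (fun z : ℂ => (z - (1 + τ - ξ l)) *
        ((∏ m, (p + q * ξ m * z - ξ m) / (z - ξ m)) *
          (∏ m, (τ - z * ξ m) / (1 + τ - z - ξ m)) *
          ((2 * z - 1 - τ) / ((z - 1) * (q * z - p)))))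
      (nhdsWithin (1 + τ - ξ l) {(1 + τ - ξ l)}ᶜ) (nhds r) ↔
    Tendsto
      (fun z : ℂ => (z - ξ l) *
        ((∏ m, (p + q * ξ m * z - ξ m) / (z - ξ m)) *
          (∏ m, (τ - z * ξ m) / (1 + τ - z - ξ m)) *
          ((2 * z - 1 - τ) / ((z - 1) * (q * z - p)))))
      (nhdsWithin (ξ l) {ξ l}ᶜ) (nhds r) := by
  have hq : q ≠ 0 := fun h => hpq0 (by rw [h, mul_zero])
  have h2 : q * τ = p := by rw [hτ]; field_simp
  have hq1 : q * (1 + τ) = 1 := by linear_combination h2 + hpq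
  set G : ℂ → ℂ := fun z =>
    (∏ m, (p + q * ξ m * z - ξ m) / (z - ξ m)) *
      (∏ m, (τ - z * ξ m) / (1 + τ - z - ξ m)) *
      ((2 * z - 1 - τ) / ((z - 1) * (q * z - p))) with hG
  -- key symmetry: G (1+τ-z) = - G z
  have key : ∀ z : ℂ, G (1 + τ - z) = - G z := by
    intro z
    have hAB :
        (∏ m, (p + q * ξ m * (1 + τ - z) - ξ m) / ((1 + τ - z) - ξ m)) *
          (∏ m, (τ - (1 + τ - z) * ξ m) / (1 + τ - (1 + τ - z) - ξ m)) =
        (∏ m, (p + q * ξ m * z - ξ m) / (z - ξ m)) *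
          (∏ m, (τ - z * ξ m) / (1 + τ - z - ξ m)) := by
      rw [← prod_mul_distrib, ← prod_mul_distrib]
      refine prod_congr rfl fun m _ => ?_
      rw [div_mul_div_comm, div_mul_div_comm]
      have hnum : (p + q * ξ m * (1 + τ - z) - ξ m) * (τ - (1 + τ - z) * ξ m) =
          (p + q * ξ m * z - ξ m) * (τ - z * ξ m) := by
        have e1 : p + q * ξ m * (1 + τ - z) - ξ m = q * (τ - z * ξ m) := by
          linear_combination ξ m * hq1 - h2
        have e2 : q * (τ - (1 + τ - z) * ξ m) = p + q * ξ m * z - ξ m := by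
          linear_combination h2 - ξ m * hq1
        calc (p + q * ξ m * (1 + τ - z) - ξ m) * (τ - (1 + τ - z) * ξ m)
            = (τ - z * ξ m) * (q * (τ - (1 + τ - z) * ξ m)) := by rw [e1]; ring
          _ = (p + q * ξ m * z - ξ m) * (τ - z * ξ m) := by rw [e2]; ring
      have hden : ((1 + τ - z) - ξ m) * (1 + τ - (1 + τ - z) - ξ m) =
          (z - ξ m) * (1 + τ - z - ξ m) := by ring
      rw [hnum, hden]
    have hC : (2 * (1 + τ - z) - 1 - τ) / (((1 + τ - z) - 1) * (q * (1 + τ - z) - p)) =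
        - ((2 * z - 1 - τ) / ((z - 1) * (q * z - p))) := by
      have hn : 2 * (1 + τ - z) - 1 - τ = -(2 * z - 1 - τ) := by ring
      have hd : ((1 + τ - z) - 1) * (q * (1 + τ - z) - p) = (z - 1) * (q * z - p) := by
        linear_combination (1 + τ - 2*z) * h2
      rw [hn, hd, neg_div]
    simp only [hG]
    rw [hAB, hC, mul_neg]
  -- the involution
  have hinv : ∀ z : ℂ, (1 + τ) - ((1 + τ) - z) = z := fun z => by ring
  set e : ℂ ≃ₜ ℂ := (Homeomorph.neg ℂ).trans (Homeomorph.addLeft (1 + τ)) with he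
  have he' : ∀ z : ℂ, e z = 1 + τ - z := fun z => by
    simp [he, Homeomorph.trans, sub_eq_add_neg]
    rfl
  have hmap : Filter.map e (nhdsWithin (ξ l) {ξ l}ᶜ) =
      nhdsWithin (1 + τ - ξ l) {(1 + τ - ξ l)}ᶜ := by
    have := e.map_punctured_nhds_eq (ξ l)
    rw [he' (ξ l)] at this
    simpa [Set.compl_eq_univ_diff] using this
  have hfun : ∀ w : ℂ, ((e w) - (1 + τ - ξ l)) * G (e w) = ((w - ξ l) * G w) := by
    intro w
    rw [he', key]
    ring
  constructor
  · intro h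
    have h2' := h.comp (hmap ▸ tendsto_map : Tendsto e (nhdsWithin (ξ l) {ξ l}ᶜ)
      (nhdsWithin (1 + τ - ξ l) {(1 + τ - ξ l)}ᶜ))
    refine h2'.congr fun w => ?_
    simp only [Function.comp]
    exact hfun w
  · intro h
    rw [← hmap, tendsto_map'_iff]
    refine h.congr fun w => ?_
    simp only [Function.comp]
    exact (hfun w).symm
end

section
/- Let Y₊ = {2i − 1 : i ∈ ℕ, i ≥ 1} and let S₊ = {2i₁ − 1, 2(i₁+i₂) − 1, ..., 2(i₁+⋯+i_{k}) − 1} with i₁, ..., i_k positive integers. Then σ(S₊, Y₊ \ S₊) = k·i₁ + (k−1)·i₂ + ⋯ + 1·i_k − k(k+1)/2, where σ(U, V) = #{(u,v) : u ∈ U, v ∈ V, u ≥ v}. -/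
open Finset

private def Pp {k : ℕ} (i : Fin k → ℕ) (l : Fin k) : ℤ :=
  ∑ m ∈ univ.filter (fun m => m ≤ l), (i m : ℤ)

private def sp {k : ℕ} (i : Fin k → ℕ) (l : Fin k) : ℤ := 2 * Pp i l - 1

private lemma Pp_def {k : ℕ} (i : Fin k → ℕ) (l : Fin k) :
    Pp i l = ∑ m ∈ Iic l, (i m : ℤ) := by
  unfold Pp; congr 1; ext m; simp

private lemma Pp_ge {k : ℕ} {i : Fin k → ℕ} (hi : ∀ l, 1 ≤ i l) (l : Fin k) :
    (l : ℤ) + 1 ≤ Pp i l := by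
  rw [Pp_def]
  have := Finset.card_nsmul_le_sum (Iic l) (fun m => (i m : ℤ)) 1
    (fun m _ => by simpa using hi m)
  rw [Fin.card_Iic] at this
  simpa using this

private lemma Pp_strictMono {k : ℕ} {i : Fin k → ℕ} (hi : ∀ l, 1 ≤ i l) :
    StrictMono (Pp i) := by
  intro a b hab
  rw [Pp_def, Pp_def]
  refine Finset.sum_lt_sum_of_subset (Iic_subset_Iic.2 hab.le) (i := b)
    (by simp) (by simp [hab.not_ge]) (by have := hi b; omega) (fun j _ _ => by positivity)

private lemma sp_strictMono {k : ℕ} {i : Fin k → ℕ} (hi : ∀ l, 1 ≤ i l) :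
    StrictMono (sp i) := fun a b hab => by
  have := Pp_strictMono hi hab
  simp only [sp]; omega

private def Al {k : ℕ} (i : Fin k → ℕ) (l : Fin k) : Finset ℤ :=
  (Finset.Icc 1 (Pp i l).toNat).image (fun n : ℕ => 2 * (n : ℤ) - 1)

private def Fs {k : ℕ} (i : Fin k → ℕ) : Finset (ℤ × ℤ) :=
  univ.biUnion (fun l => (Al i l \ univ.image (sp i)).image (fun v => (sp i l, v)))

private lemma mem_Al {k : ℕ} {i : Fin k → ℕ} (hi : ∀ l, 1 ≤ i l) (l : Fin k) (v : ℤ) :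
    v ∈ Al i l ↔ (∃ n : ℕ, 1 ≤ n ∧ v = 2 * (n : ℤ) - 1) ∧ v ≤ sp i l := by
  have hP : (l : ℤ) + 1 ≤ Pp i l := Pp_ge hi l
  constructor
  · rintro hv
    simp only [Al, mem_image, mem_Icc] at hv
    obtain ⟨n, ⟨h1, h2⟩, rfl⟩ := hv
    have : (n : ℤ) ≤ Pp i l := by
      have := Int.toNat_of_nonneg (a := Pp i l) (by omega)
      omega
    exact ⟨⟨n, h1, rfl⟩, by simp only [sp]; omega⟩
  · rintro ⟨⟨n, h1, rfl⟩, h2⟩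
    simp only [sp] at h2
    simp only [Al, mem_image, mem_Icc]
    refine ⟨n, ⟨h1, ?_⟩, rfl⟩
    omega

private lemma set_eq {k : ℕ} {i : Fin k → ℕ} (hi : ∀ l, 1 ≤ i l) :
    {uv : ℤ × ℤ |
        uv.1 ∈ Set.range (sp i) ∧
        uv.2 ∈ {x : ℤ | ∃ n : ℕ, 1 ≤ n ∧ x = 2 * (n : ℤ) - 1} \ Set.range (sp i) ∧
        uv.2 ≤ uv.1} = ↑(Fs i) := by
  ext ⟨u, v⟩
  simp only [Set.mem_setOf_eq, Set.mem_range, Set.mem_diff, mem_coe, Fs, mem_biUnion,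
    mem_univ, true_and, mem_image, mem_sdiff, Prod.mk.injEq]
  constructor
  · rintro ⟨⟨l, rfl⟩, ⟨hY, hnS⟩, hle⟩
    exact ⟨l, v, ⟨(mem_Al hi l v).2 ⟨hY, hle⟩, hnS⟩, rfl, rfl⟩
  · rintro ⟨l, v', ⟨hv', hnS⟩, rfl, rfl⟩
    obtain ⟨hY, hle⟩ := (mem_Al hi l v').1 hv'
    exact ⟨⟨l, rfl⟩, ⟨hY, hnS⟩, hle⟩

private lemma inter_eq {k : ℕ} {i : Fin k → ℕ} (hi : ∀ l, 1 ≤ i l) (l : Fin k) :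
    Al i l ∩ univ.image (sp i) = (Iic l).image (sp i) := by
  ext x
  simp only [mem_inter, mem_image, mem_univ, true_and, mem_Iic]
  constructor
  · rintro ⟨hA, m, rfl⟩
    obtain ⟨⟨n, hn, hx⟩, hle⟩ := (mem_Al hi l _).1 hA
    exact ⟨m, ((sp_strictMono hi).le_iff_le).1 hle, rfl⟩
  · rintro ⟨m, hm, rfl⟩
    refine ⟨(mem_Al hi l _).2 ⟨⟨(Pp i m).toNat, ?_, ?_⟩, (sp_strictMono hi).monotone hm⟩, m, rfl⟩
    · have := Pp_ge hi m; omega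
    · have h0 : (0:ℤ) ≤ Pp i m := le_trans (by positivity) (Pp_ge hi m)
      simp only [sp]
      rw [Int.toNat_of_nonneg h0]

private lemma card_Fs {k : ℕ} {i : Fin k → ℕ} (hi : ∀ l, 1 ≤ i l) :
    (Fs i).card = ∑ l : Fin k, ((Pp i l).toNat - ((l : ℕ) + 1)) := by
  rw [Fs, card_biUnion]
  · refine Finset.sum_congr rfl fun l _ => ?_
    rw [card_image_of_injective _ (fun a b h => by simpa using h)]
    have h1 := Finset.card_sdiff_add_card_inter (Al i l) (univ.image (sp i))
    rw [inter_eq hi l, card_image_of_injective _ (sp_strictMono hi).injective,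
      Fin.card_Iic] at h1
    have h2 : (Al i l).card = (Pp i l).toNat := by
      rw [Al, card_image_of_injective _ (fun a b h => by omega), Nat.card_Icc]
      omega
    omega
  · intro a _ b _ hab
    simp only [Finset.disjoint_left, mem_image]
    rintro ⟨u, v⟩ ⟨v', hv', heq⟩ ⟨w', hw', heq'⟩
    rw [← heq'] at heq
    exact hab ((sp_strictMono hi).injective ((Prod.ext_iff.1 heq).1))

/-- σ(S₊, Y₊ \ S₊) = k·i₁ + (k−1)·i₂ + ⋯ + i_k − k(k+1)/2 for the alternating
initial condition, where S₊ ⊆ Y₊ = {odd positive integers} is parametrized by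
gap variables i₁, …, i_k ≥ 1 and s_l = 2(i₁ + ⋯ + i_l) − 1. -/
theorem stmt9 (k : ℕ) (i : Fin k → ℕ) (hi : ∀ l, 1 ≤ i l) :
    Set.ncard {uv : ℤ × ℤ |
        uv.1 ∈ Set.range (fun l : Fin k =>
          2 * (∑ m ∈ univ.filter (fun m => m ≤ l), (i m : ℤ)) - 1) ∧
        uv.2 ∈ {x : ℤ | ∃ n : ℕ, 1 ≤ n ∧ x = 2 * (n : ℤ) - 1} \
          Set.range (fun l : Fin k =>
            2 * (∑ m ∈ univ.filter (fun m => m ≤ l), (i m : ℤ)) - 1) ∧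
        uv.2 ≤ uv.1}
      + k * (k + 1) / 2 = ∑ l : Fin k, (k - (l : ℕ)) * i l := by
  have hfun : (fun l : Fin k =>
      2 * (∑ m ∈ univ.filter (fun m => m ≤ l), (i m : ℤ)) - 1) = sp i := rfl
  rw [hfun, set_eq hi, Set.ncard_coe_finset, card_Fs hi]
  -- toNat of Pp as a ℕ sum
  have hPnat : ∀ l : Fin k, (Pp i l).toNat = ∑ m ∈ Iic l, i m := by
    intro l
    have : Pp i l = ((∑ m ∈ Iic l, i m : ℕ) : ℤ) := by rw [Pp_def]; push_cast; rfl
    rw [this, Int.toNat_natCast]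
  have hge : ∀ l : Fin k, (l : ℕ) + 1 ≤ (Pp i l).toNat := by
    intro l; have := Pp_ge hi l; omega
  -- Gauss sum
  have hGauss : k * (k + 1) / 2 = ∑ l : Fin k, ((l : ℕ) + 1) := by
    rw [Fin.sum_univ_eq_sum_range (fun j => j + 1) k]
    have h1 : ∑ j ∈ range (k + 1), j = ∑ j ∈ range k, (j + 1) + 0 :=
      Finset.sum_range_succ' id k
    rw [Finset.sum_range_id, Nat.add_sub_cancel, Nat.mul_comm] at h1
    omega
  rw [hGauss, ← Finset.sum_add_distrib]
  have hstep : ∀ l : Fin k, (Pp i l).toNat - ((l : ℕ) + 1) + ((l : ℕ) + 1)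
      = ∑ m ∈ Iic l, i m := by
    intro l; rw [Nat.sub_add_cancel (hge l), hPnat l]
  rw [Finset.sum_congr rfl (fun l _ => hstep l)]
  -- swap order of summation
  have hswap : ∑ l : Fin k, ∑ m ∈ Iic l, i m = ∑ m : Fin k, ∑ l ∈ Ici m, i m := by
    exact Finset.sum_comm' (fun x y => by simp [mem_Iic, mem_Ici])
  rw [hswap]
  refine Finset.sum_congr rfl fun m _ => ?_
  rw [Finset.sum_const, Fin.card_Ici, smul_eq_mul]
end
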